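/- Let f : ℝ^n → ℝ be convex and differentiable and let the sequences (x^{(t)}), (y^{(t)}), (z^{(t)}) satisfy y^{(t)} = μ_y x^{(t)} + (1-μ_y) z^{(t)} with μ_y ∈ [0,1). Then for any x_*, ⟨∇f(x^{(t)}), z^{(t)} - x^{(t)}⟩ ≤ -(μ_y/(1-μ_y)) B_f(x^{(t)}, y^{(t)}) - (1/(1-μ_y)) B_f(y^{(t)}, x^{(t)}) + f(x_*) - f(x^{(t)}) + ⟨∇f(y^{(t)}), z^{(t)} - x_*⟩, where B_f(a,b) = f(a) - f(b) - ⟨∇f(b), a - b⟩ is the Bregman divergence. -/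

import Mathlib

open RealInnerProductSpace

/-- Bregman divergence of `f` with gradient map `f'`. -/
noncomputable def bregman {n : ℕ} (f : EuclideanSpace ℝ (Fin n) → ℝ)
    (f' : EuclideanSpace ℝ (Fin n) → EuclideanSpace ℝ (Fin n))
    (a b : EuclideanSpace ℝ (Fin n)) : ℝ :=
  f a - f b - ⟪f' b, a - b⟫

lemma grad_first_order {n : ℕ} (f : EuclideanSpace ℝ (Fin n) → ℝ)
    (f' : EuclideanSpace ℝ (Fin n) → EuclideanSpace ℝ (Fin n))
    (hgrad : ∀ p, HasGradientAt f (f' p) p)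
    (hconv : ConvexOn ℝ Set.univ f)
    (a b : EuclideanSpace ℝ (Fin n)) :
    f b + ⟪f' b, a - b⟫ ≤ f a := by
  set g : ℝ → ℝ := fun t => f (b + t • (a - b)) with hg
  have hderiv : HasDerivAt g ⟪f' b, a - b⟫ 0 := by
    have hc : HasDerivAt (fun t : ℝ => b + t • (a - b)) (a - b) 0 := by
      simpa using ((hasDerivAt_id (0:ℝ)).smul_const (a - b)).const_add b
    have hF : HasFDerivAt f (InnerProductSpace.toDual ℝ _ (f' b))
        (b + (0:ℝ) • (a - b)) := by simpa using hasGradientAt_iff_hasFDerivAt.mp (hgrad b)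
    have := hF.comp_hasDerivAt (x := (0:ℝ)) hc
    simpa [InnerProductSpace.toDual_apply_apply, hg, Function.comp_def] using this
  have hslope : Filter.Tendsto (fun t => (g t - g 0) / t) (nhdsWithin 0 (Set.Ioi 0))
      (nhds ⟪f' b, a - b⟫) := by
    have := hasDerivAt_iff_tendsto_slope.mp hderiv
    have h := this.mono_left (nhdsWithin_mono 0 (by
      intro t ht
      exact ne_of_gt ht : Set.Ioi (0:ℝ) ⊆ {(0:ℝ)}ᶜ))
    have heq : (fun t => (g t - g 0) / t) = slope g 0 := by
      funext t; simp [slope_def_field]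
    rw [heq]; exact h
  have hbound : ∀ᶠ t in nhdsWithin 0 (Set.Ioi (0:ℝ)), (g t - g 0) / t ≤ f a - f b := by
    filter_upwards [Ioo_mem_nhdsGT_of_mem (by norm_num : (0:ℝ) ∈ Set.Ico 0 1)] with t ht
    have ht0 : 0 < t := ht.1
    have ht1 : t < 1 := ht.2
    have hcomb : g t ≤ (1 - t) * f b + t * f a := by
      have := hconv.2 (Set.mem_univ b) (Set.mem_univ a) (by linarith : (0:ℝ) ≤ 1 - t)
        (le_of_lt ht0) (by ring)
      have heq : (1 - t) • b + t • a = b + t • (a - b) := by module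
      simpa [heq, smul_eq_mul] using this
    have hg0 : g 0 = f b := by simp [hg]
    rw [div_le_iff₀ ht0, hg0]
    nlinarith
  have := le_of_tendsto hslope hbound
  linarith

/-- The key inequality bounding `⟨∇f(x), z - x⟩` via Bregman divergences when
`y = μy x + (1-μy) z`. -/
theorem gpa_inner_product_bound
    (n : ℕ) (μy : ℝ) (hμy0 : 0 ≤ μy) (hμy1 : μy < 1)
    (f : EuclideanSpace ℝ (Fin n) → ℝ) (f' : EuclideanSpace ℝ (Fin n) → EuclideanSpace ℝ (Fin n))
    (hgrad : ∀ p, HasGradientAt f (f' p) p)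
    (hconv : ConvexOn ℝ Set.univ f)
    (x y z xstar : EuclideanSpace ℝ (Fin n))
    (hy : y = μy • x + (1 - μy) • z) :
    ⟪f' x, z - x⟫ ≤
      -(μy / (1 - μy)) * bregman f f' x y - (1 / (1 - μy)) * bregman f f' y x
        + f xstar - f x + ⟪f' y, z - xstar⟫ := by
  have hs : (0:ℝ) < 1 - μy := by linarith
  have hB : 0 ≤ bregman f f' xstar y := by
    have := grad_first_order f f' hgrad hconv xstar y
    simp only [bregman]; linarith
  -- vector identities
  have h1 : y - x = (1 - μy) • (z - x) := by rw [hy]; module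
  have h2 : (1 - μy) • (z - y) = μy • (y - x) := by rw [hy]; module
  have h3 : z - xstar = (z - y) + (y - xstar) := by module
  -- inner product identities
  have i1 : ⟪f' x, y - x⟫ = (1 - μy) * ⟪f' x, z - x⟫ := by
    rw [h1, real_inner_smul_right]
  have i2 : (1 - μy) * ⟪f' y, z - y⟫ = μy * ⟪f' y, y - x⟫ := by
    rw [← real_inner_smul_right, h2, real_inner_smul_right]
  have i3 : ⟪f' y, z - xstar⟫ = ⟪f' y, z - y⟫ + ⟪f' y, y - xstar⟫ := by
    rw [h3, inner_add_right]
  have i4 : ⟪f' y, x - y⟫ = -⟪f' y, y - x⟫ := by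
    rw [show x - y = -(y - x) by module, inner_neg_right]
  have i5 : ⟪f' y, xstar - y⟫ = -⟪f' y, y - xstar⟫ := by
    rw [show xstar - y = -(y - xstar) by module, inner_neg_right]
  have key : -(μy / (1 - μy)) * (f x - f y - ⟪f' y, x - y⟫)
      - (1 / (1 - μy)) * (f y - f x - ⟪f' x, y - x⟫)
        + f xstar - f x + ⟪f' y, z - xstar⟫
      = ⟪f' x, z - x⟫ + (f xstar - f y - ⟪f' y, xstar - y⟫) := by
    rw [i3, i4, i5, i1]
    set A : ℝ := ⟪f' x, z - x⟫
    set D : ℝ := ⟪f' y, z - y⟫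
    set E : ℝ := ⟪f' y, y - x⟫
    set C : ℝ := ⟪f' y, y - xstar⟫
    field_simp
    linear_combination i2
  simp only [bregman] at hB ⊢
  rw [key]
  linarith
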